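/- Let G be a finite simple graph, π a permutation of its vertices, and G_2 the subgraph induced on the vertices having at most 1 neighbor preceding them in π. Then G_2 is a forest. -/

import Mathlib

open SimpleGraph Walk

private lemma getVert_injOn_of_isPath {V : Type*} {G : SimpleGraph V} {a b : V}
    (p : G.Walk a b) (hp : p.IsPath) : ∀ i j, i ≤ p.length → j ≤ p.length →
      p.getVert i = p.getVert j → i = j := by
  induction p with
  | nil => intro i j hi hj _; simp at hi hj; omega
  | cons h q ih =>
    rw [Walk.cons_isPath_iff] at hp
    intro i j hi hj hij
    match i, j with
    | 0, 0 => rfl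
    | 0, (k+1) =>
      exfalso
      apply hp.2
      rw [Walk.getVert_zero, Walk.getVert_cons_succ] at hij
      exact Walk.mem_support_iff_exists_getVert.mpr ⟨k, hij.symm, by
        simp [Walk.length_cons] at hj; omega⟩
    | (k+1), 0 =>
      exfalso
      apply hp.2
      rw [Walk.getVert_zero, Walk.getVert_cons_succ] at hij
      exact Walk.mem_support_iff_exists_getVert.mpr ⟨k, hij, by
        simp [Walk.length_cons] at hi; omega⟩
    | (k+1), (l+1) =>
      rw [Walk.getVert_cons_succ, Walk.getVert_cons_succ] at hij
      have := ih hp.1 k l (by simp [Walk.length_cons] at hi; omega)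
        (by simp [Walk.length_cons] at hj; omega) hij
      omega

/-- For any ordering `σ` of the vertices, the subgraph `G_2` induced on the vertices
with at most one neighbor preceding them is a forest (acyclic). -/
theorem G2_isAcyclic {V : Type*} [Fintype V] [DecidableEq V]
    (G : SimpleGraph V) [DecidableRel G.Adj] (σ : V ≃ Fin (Fintype.card V)) :
    (G.induce {v : V | ((G.neighborFinset v).filter (fun w => σ w < σ v)).card ≤ 1}).IsAcyclic := by
  set S : Set V := {v : V | ((G.neighborFinset v).filter (fun w => σ w < σ v)).card ≤ 1} with hS
  set H := G.induce S with hH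
  intro v p hp
  -- pick the vertex of the cycle with maximal `σ` value
  obtain ⟨u, hu, hmax⟩ := p.support.toFinset.exists_max_image (fun x => σ (x : V))
    ⟨v, by simp [Walk.start_mem_support]⟩
  rw [List.mem_toFinset] at hu
  set q := p.rotate u hu with hqdef
  have hq : q.IsCycle := hp.rotate hu
  have hnq : ¬ q.Nil := hq.not_nil
  have h3 : 3 ≤ q.length := hq.three_le_length
  -- the two neighbors of `u` on the cycle
  set a := q.getVert 1 with ha
  set b := q.getVert (q.length - 1) with hb
  have hadj1 : q.toSubgraph.Adj u a := by
    have := q.toSubgraph_adj_getVert (i := 0) (by omega)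
    simpa using this
  have hadj2 : q.toSubgraph.Adj b u := by
    have := q.toSubgraph_adj_getVert (i := q.length - 1) (by omega)
    have hlen : q.length - 1 + 1 = q.length := by omega
    rw [hlen, Walk.getVert_length] at this
    exact this
  -- they are distinct, using that the tail of the cycle is a path
  have ht : q.tail.IsPath := by
    apply Walk.IsPath.mk'
    rw [Walk.support_tail_of_not_nil q hnq]
    exact hq.support_nodup
  have htl : q.tail.length + 1 = q.length := Walk.length_tail_add_one hnq
  have hab : a ≠ b := by
    intro hab
    have e0 : q.tail.getVert 0 = a := Walk.getVert_zero _
    have e1 : q.tail.getVert (q.length - 2) = b := by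
      rw [Walk.getVert_tail _]
      have : q.length - 2 + 1 = q.length - 1 := by omega
      rw [this]
    have := getVert_injOn_of_isPath q.tail ht 0 (q.length - 2) (by omega) (by omega)
      (by rw [e0, e1, hab])
    omega
  -- transfer adjacency back to `p`
  rw [hqdef, Walk.toSubgraph_rotate] at hadj1 hadj2
  have hGa : H.Adj u a := p.toSubgraph.adj_sub hadj1
  have hGb : H.Adj b u := p.toSubgraph.adj_sub hadj2
  have hamem : a ∈ p.support := (p.mem_verts_toSubgraph).mp hadj1.snd_mem
  have hbmem : b ∈ p.support := (p.mem_verts_toSubgraph).mp hadj2.fst_mem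
  -- both have smaller σ value than u
  have hlta : σ (a : V) < σ (u : V) := by
    refine lt_of_le_of_ne (hmax a (List.mem_toFinset.mpr hamem)) ?_
    intro h
    exact hGa.ne (Subtype.ext (σ.injective h)).symm
  have hltb : σ (b : V) < σ (u : V) := by
    refine lt_of_le_of_ne (hmax b (List.mem_toFinset.mpr hbmem)) ?_
    intro h
    exact hGb.ne (Subtype.ext (σ.injective h))
  -- contradiction with `u ∈ S`
  have hAa : G.Adj (u : V) (a : V) := hGa
  have hAb : G.Adj (u : V) (b : V) := hGb.symm
  have hsub : ({(a : V), (b : V)} : Finset V) ⊆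
      (G.neighborFinset (u : V)).filter (fun w => σ w < σ (u : V)) := by
    intro x hx
    rw [Finset.mem_insert, Finset.mem_singleton] at hx
    rcases hx with rfl | rfl
    · exact Finset.mem_filter.mpr ⟨G.mem_neighborFinset _ _ |>.mpr hAa, hlta⟩
    · exact Finset.mem_filter.mpr ⟨G.mem_neighborFinset _ _ |>.mpr hAb, hltb⟩
  have hcard : 2 ≤ ((G.neighborFinset (u : V)).filter (fun w => σ w < σ (u : V))).card := by
    have : ({(a : V), (b : V)} : Finset V).card = 2 :=
      Finset.card_pair (fun h => hab (Subtype.ext h))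
    rw [← this]
    exact Finset.card_le_card hsub
  have := u.2
  simp only [hS, Set.mem_setOf_eq] at this
  omega
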